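/- Let k be a positive integer (q = k), let μ_1,…,μ_k and λ_1,…,λ_k be complex numbers with μ_j ≠ λ_i for all j, i, and let ℓ_j ∈ ℂ^p, r_i ∈ ℂ^m, v_j ∈ ℂ^m, w_i ∈ ℂ^p be tangential data. Fix i ∈ {1,…,k} and suppose the matrix 𝕃s − λ_i·𝕃 is invertible. Then the Loewner interpolant H(s) = 𝕎(𝕃s − s𝕃)^{−1}𝕍 satisfies the right tangential interpolation condition H(λ_i)·r_i = w_i, i.e., 𝕎(𝕃s − λ_i𝕃)^{−1}𝕍 r_i = w_i. -/

import Mathlib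

open Matrix Complex

/-- With `q = k`, if the pencil matrix `𝕃s − λ_i·𝕃` is invertible, the Loewner
interpolant `H(s) = 𝕎(𝕃s − s𝕃)⁻¹𝕍` satisfies the right tangential interpolation condition
`H(λ_i)·r_i = w_i`. -/
theorem loewner_right_tangential_interpolation
    (k p m : ℕ) (hk : 0 < k)
    (μ : Fin k → ℂ) (lam : Fin k → ℂ)
    (hne : ∀ j i, μ j ≠ lam i)
    (l : Fin k → Fin p → ℂ) (r : Fin k → Fin m → ℂ)
    (v : Fin k → Fin m → ℂ) (w : Fin k → Fin p → ℂ)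
    (L : Matrix (Fin k) (Fin k) ℂ)
    (hL : ∀ j i, L j i = (v j ⬝ᵥ r i - l j ⬝ᵥ w i) / (μ j - lam i))
    (Ls : Matrix (Fin k) (Fin k) ℂ)
    (hLs : ∀ j i, Ls j i = (μ j * (v j ⬝ᵥ r i) - lam i * (l j ⬝ᵥ w i)) / (μ j - lam i))
    (V : Matrix (Fin k) (Fin m) ℂ) (hV : ∀ j a, V j a = v j a)
    (W : Matrix (Fin p) (Fin k) ℂ) (hW : ∀ a i, W a i = w i a)
    (i : Fin k)
    (hinv : IsUnit (Ls - lam i • L)) :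
    (W * (Ls - lam i • L)⁻¹ * V) *ᵥ r i = w i := by
  set A := Ls - lam i • L with hA
  have hAe : A *ᵥ Pi.single i 1 = V *ᵥ r i := by
    funext j
    rw [Matrix.mulVec_single]
    have hd : μ j - lam i ≠ 0 := sub_ne_zero.mpr (hne j i)
    have hVr : (V *ᵥ r i) j = v j ⬝ᵥ r i := by
      simp [Matrix.mulVec, dotProduct]
      exact Finset.sum_congr rfl fun a _ => by rw [hV]
    rw [hVr]
    simp only [hA, Pi.smul_apply, MulOpposite.smul_eq_mul_unop, MulOpposite.unop_op, mul_one, Matrix.col_apply, Matrix.sub_apply, Matrix.smul_apply, hL, hLs, smul_eq_mul]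
    field_simp
    ring
  have hdet : IsUnit A.det := (Matrix.isUnit_iff_isUnit_det A).mp hinv
  have hinvA : A⁻¹ * A = 1 := Matrix.nonsing_inv_mul A hdet
  have : (W * A⁻¹ * V) *ᵥ r i = W *ᵥ (A⁻¹ *ᵥ (A *ᵥ Pi.single i 1)) := by
    rw [hAe, ← Matrix.mulVec_mulVec, ← Matrix.mulVec_mulVec]
  rw [this, Matrix.mulVec_mulVec, Matrix.mulVec_mulVec, Matrix.mul_assoc, hinvA, Matrix.mul_one]
  funext a
  rw [Matrix.mulVec_single]
  simp [hW]
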